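/- Let β = (b, δ) be a signed permutation and C_s a cycle of b with minimal element k. If |δ ∩ C_s| is odd and x ∈ ℝⁿ satisfies x_j = (-1)^{|δ ∩ {j}|} x_{b⁻¹(j)} for all j ∈ [n], then x_k = 0. -/

import Mathlib

open Equiv Finset

/-- The cycle (as a finset) of `b` containing `i`. -/
def cyc {n : ℕ} (b : Equiv.Perm (Fin n)) (i : Fin n) : Finset (Fin n) :=
  Finset.univ.filter (b.SameCycle i)

theorem coord_eq_zero_of_odd_cycle {n : ℕ} (b : Equiv.Perm (Fin n))
    (δ : Finset (Fin n)) (k : Fin n)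
    (hmin : ∀ j, b.SameCycle k j → k ≤ j)
    (hodd : Odd ((δ ∩ cyc b k).card))
    (x : Fin n → ℝ)
    (hx : ∀ j : Fin n, x j = (-1 : ℝ) ^ ((δ ∩ {j}).card) * x (b⁻¹ j)) :
    x k = 0 := by
  classical
  set S : Fin n → ℝ := fun j => (-1 : ℝ) ^ ((δ ∩ {j}).card) with hS
  -- k is a periodic point of b
  have hper : k ∈ Function.periodicPts ⇑b := by
    refine ⟨orderOf b, orderOf_pos b, ?_⟩
    show (⇑b)^[orderOf b] k = k
    rw [Equiv.Perm.iterate_eq_pow, pow_orderOf_eq_one]; rfl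
  set m := Function.minimalPeriod ⇑b k with hm
  have hmpos : 0 < m := Function.minimalPeriod_pos_of_mem_periodicPts hper
  have hbm : (b ^ m) k = k := by
    have := Function.iterate_minimalPeriod (f := ⇑b) (x := k)
    rwa [Equiv.Perm.iterate_eq_pow] at this
  -- main induction
  have key : ∀ t : ℕ, x ((b ^ t) k) = (∏ i ∈ Finset.range t, S ((b ^ (i + 1)) k)) * x k := by
    intro t
    induction t with
    | zero => simp
    | succ t ih =>
      have h1 : (b ^ (t + 1)) k = b ((b ^ t) k) := by
        rw [pow_succ']; rfl
      have h2 : b⁻¹ ((b ^ (t + 1)) k) = (b ^ t) k := by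
        rw [h1, Equiv.Perm.inv_def, Equiv.symm_apply_apply]
      rw [hx ((b ^ (t + 1)) k), h2, ih, Finset.prod_range_succ]
      ring
  -- the product over range m equals product over the cycle
  have hinj : ∀ i < m, ∀ j < m, (b ^ (i + 1)) k = (b ^ (j + 1)) k → i = j := by
    intro i hi j hj hij
    have : (b ^ i) k = (b ^ j) k := by
      have h1 : (b ^ (i + 1)) k = b ((b ^ i) k) := by rw [pow_succ']; rfl
      have h2 : (b ^ (j + 1)) k = b ((b ^ j) k) := by rw [pow_succ']; rfl
      rw [h1, h2] at hij
      exact b.injective hij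
    exact Function.iterate_injOn_Iio_minimalPeriod (f := ⇑b) (x := k)
      (Set.mem_Iio.mpr hi) (Set.mem_Iio.mpr hj) this
  have hmem : ∀ i, (b ^ (i + 1)) k ∈ cyc b k := by
    intro i
    simp only [cyc, Finset.mem_filter, Finset.mem_univ, true_and]
    exact ⟨(i + 1 : ℕ), by rw [zpow_natCast]⟩
  have hsurj : ∀ j ∈ cyc b k, ∃ i ∈ Finset.range m, (b ^ (i + 1)) k = j := by
    intro j hj
    simp only [cyc, Finset.mem_filter, Finset.mem_univ, true_and] at hj
    obtain ⟨i, _, hi⟩ := hj.exists_pow_eq'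
    have hmod : (b ^ (i % m)) k = (b ^ i) k := by
      have := Function.iterate_mod_minimalPeriod_eq (f := ⇑b) (x := k) (n := i)
      rwa [Equiv.Perm.iterate_eq_pow, Equiv.Perm.iterate_eq_pow] at this
    have hlt : i % m < m := Nat.mod_lt i hmpos
    rcases Nat.eq_zero_or_pos (i % m) with h0 | h0
    · refine ⟨m - 1, Finset.mem_range.mpr (Nat.sub_lt hmpos one_pos), ?_⟩
      have hmm : m - 1 + 1 = m := by omega
      rw [hmm, hbm, ← hi, ← hmod, h0, pow_zero]; rfl
    · refine ⟨i % m - 1, Finset.mem_range.mpr (by omega), ?_⟩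
      have hmm : i % m - 1 + 1 = i % m := by omega
      rw [hmm, hmod, hi]
  have hprod : (∏ i ∈ Finset.range m, S ((b ^ (i + 1)) k)) = ∏ j ∈ cyc b k, S j := by
    refine Finset.prod_bij (fun i _ => (b ^ (i + 1)) k) (fun i _ => hmem i) ?_ ?_ (fun _ _ => rfl)
    · intro i hi j hj h
      exact hinj i (Finset.mem_range.mp hi) j (Finset.mem_range.mp hj) h
    · intro j hj
      obtain ⟨i, hi, hij⟩ := hsurj j hj
      exact ⟨i, hi, hij⟩
  have hprodval : (∏ j ∈ cyc b k, S j) = (-1 : ℝ) ^ ((δ ∩ cyc b k).card) := by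
    rw [hS]
    rw [Finset.prod_pow_eq_pow_sum]
    congr 1
    have : ∀ j : Fin n, (δ ∩ {j}).card = if j ∈ δ then 1 else 0 := by
      intro j
      by_cases h : j ∈ δ
      · rw [Finset.inter_comm, Finset.singleton_inter_of_mem h]; simp [h]
      · rw [Finset.inter_comm, Finset.singleton_inter_of_notMem h]; simp [h]
    rw [Finset.sum_congr rfl (fun j _ => this j), Finset.inter_comm δ,
      ← Finset.filter_mem_eq_inter, Finset.card_filter]
  have hfinal := key m
  rw [hbm, hprod, hprodval, Odd.neg_one_pow hodd] at hfinal
  linarith
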